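/- Let K be an algebraically closed field of characteristic 0 and B a finite-dimensional commutative K-algebra such that for every ring homomorphism g from B to K and every maximal ideal m of B, dim_K(m/m²) ≤ 1. Then B is isomorphic as a K-algebra to a finite product of truncated polynomial rings K[X]/(X^{d_i}) with d_i ≥ 1. -/

import Mathlib

set_option maxHeartbeats 1000000


open Polynomial

lemma aux_inf_le_prod {R : Type*} [CommRing R] {ι : Type*} (s : Finset ι)
    (f : ι → Ideal R) (h : Set.Pairwise ↑s (Function.onFun IsCoprime f)) :
    s.inf f ≤ ∏ i ∈ s, f i := by
  classical
  induction s using Finset.induction_on with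
  | empty => simp
  | @insert a s ha ih =>
    rw [Finset.inf_insert, Finset.prod_insert ha]
    have hcop : IsCoprime (f a) (∏ i ∈ s, f i) :=
      IsCoprime.prod_right fun i hi =>
        h (Finset.mem_insert_self a s) (Finset.mem_insert_of_mem hi)
          (by rintro rfl; exact ha hi)
    calc f a ⊓ s.inf f ≤ f a ⊓ ∏ i ∈ s, f i :=
          inf_le_inf_left _ (ih (h.mono (by simp [Finset.coe_insert, Set.subset_insert])))
      _ = f a * ∏ i ∈ s, f i := Ideal.inf_eq_mul_of_isCoprime hcop
      _ ≤ f a * ∏ i ∈ s, f i := le_rfl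

lemma aux_factor {K B : Type} [Field K] [IsAlgClosed K] [CommRing B] [Algebra K B]
    [FiniteDimensional K B] (m : Ideal B) (hm : m.IsMaximal) (t : B) (ht : t ∈ m)
    (hc : ∀ x ∈ m, ∃ c : K, x - c • t ∈ m ^ 2) (n : ℕ) (hn : 1 ≤ n) :
    ∃ d : ℕ, 1 ≤ d ∧
      Nonempty (((Polynomial K) ⧸ Ideal.span {(X : Polynomial K) ^ d}) ≃ₐ[K] B ⧸ m ^ n) := by
  haveI := hm
  haveI : FiniteDimensional K (B ⧸ m) :=
    Module.Finite.of_surjective (Ideal.Quotient.mkₐ K m).toLinearMap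
      (Ideal.Quotient.mkₐ_surjective K m)
  have hres : ∀ b : B, ∃ c : K, b - algebraMap K B c ∈ m := by
    intro b
    haveI : Algebra.IsIntegral K (B ⧸ m) := Algebra.IsIntegral.of_finite K _
    letI : Field (B ⧸ m) := Ideal.Quotient.field m
    obtain ⟨c, hcq⟩ := (IsAlgClosed.algebraMap_bijective_of_isIntegral
      (k := K) (K := B ⧸ m)).2 (Ideal.Quotient.mk m b)
    refine ⟨c, ?_⟩
    have h1 : Ideal.Quotient.mk m b = Ideal.Quotient.mk m (algebraMap K B c) := by
      rw [← hcq]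
      exact ((Ideal.Quotient.mkₐ K m).commutes c).symm
    exact Ideal.Quotient.eq.mp h1
  let π : B →ₐ[K] B ⧸ m ^ n := Ideal.Quotient.mkₐ K (m ^ n)
  have hπ : Function.Surjective π := Ideal.Quotient.mkₐ_surjective K _
  set A := B ⧸ m ^ n with hA
  let τ : A := π t
  let M : Ideal A := m.map (Ideal.Quotient.mk (m ^ n))
  have hπmk : ∀ b : B, π b = Ideal.Quotient.mk (m ^ n) b := fun b => rfl
  have hMpow : ∀ k : ℕ, M ^ k = (m ^ k).map (Ideal.Quotient.mk (m ^ n)) :=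
    fun k => (Ideal.map_pow _ _ _).symm
  have hMn : M ^ n = ⊥ := by rw [hMpow]; exact Ideal.map_quotient_self _
  have hτM : τ ∈ M := Ideal.mem_map_of_mem _ ht
  have hresA : ∀ a : A, ∃ c : K, a - algebraMap K A c ∈ M := by
    intro a
    obtain ⟨b, rfl⟩ := hπ a
    obtain ⟨c, hc'⟩ := hres b
    refine ⟨c, ?_⟩
    have h1 : π b - algebraMap K A c = Ideal.Quotient.mk (m ^ n) (b - algebraMap K B c) := by
      rw [map_sub, ← hπmk, ← hπmk, ← π.commutes c]
    rw [h1]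
    exact Ideal.mem_map_of_mem _ hc'
  have hMt : ∀ x ∈ M, ∃ c : K, x - algebraMap K A c * τ ∈ M ^ 2 := by
    intro x hx
    obtain ⟨y, hy, rfl⟩ :=
      (Ideal.mem_map_iff_of_surjective _ Ideal.Quotient.mk_surjective).mp hx
    obtain ⟨c, hc'⟩ := hc y hy
    refine ⟨c, ?_⟩
    have h1 : Ideal.Quotient.mk (m ^ n) y - algebraMap K A c * τ
        = Ideal.Quotient.mk (m ^ n) (y - c • t) := by
      rw [map_sub]
      congr 1
      rw [Algebra.smul_def, map_mul, ← hπmk, ← hπmk, ← π.commutes c]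
    rw [h1, hMpow 2]
    exact Ideal.mem_map_of_mem _ hc'
  have hM2 : M ≤ Ideal.span {τ} ⊔ M ^ 2 := by
    intro x hx
    obtain ⟨c, hc'⟩ := hMt x hx
    have h1 : x = algebraMap K A c * τ + (x - algebraMap K A c * τ) := by ring
    rw [h1]
    exact Submodule.add_mem _
      (Ideal.mem_sup_left (Ideal.mul_mem_left _ _ (Ideal.subset_span rfl)))
      (Ideal.mem_sup_right hc')
  have hNak : ∀ k : ℕ, M ≤ Ideal.span {τ} ⊔ M ^ (k + 1) := by
    intro k
    induction k with
    | zero => simpa only [zero_add, pow_one] using hM2.trans (sup_le_sup_left (Ideal.pow_le_pow_right one_le_two) _)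
    | succ k ih =>
      refine ih.trans (sup_le le_sup_left ?_)
      calc M ^ (k + 1) = M ^ k * M := pow_succ M k
        _ ≤ M ^ k * (Ideal.span {τ} ⊔ M ^ 2) := Ideal.mul_mono_right hM2
        _ = M ^ k * Ideal.span {τ} ⊔ M ^ k * M ^ 2 := Ideal.mul_sup _ _ _
        _ ≤ Ideal.span {τ} ⊔ M ^ (k + 1 + 1) :=
            sup_le_sup Ideal.mul_le_right (le_of_eq (pow_add M k 2).symm)
  have hMτ : M = Ideal.span {τ} := by
    refine le_antisymm ?_ (Ideal.span_le.mpr (by simpa using hτM))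
    have h1 := hNak (n - 1)
    rw [Nat.sub_add_cancel hn, hMn, sup_bot_eq] at h1
    exact h1
  let φ : Polynomial K →ₐ[K] A := aeval τ
  have key : ∀ k : ℕ, ∀ a : A, ∃ p : Polynomial K, a - φ p ∈ M ^ k := by
    intro k
    induction k with
    | zero => intro a; exact ⟨0, by simp [Ideal.one_eq_top]⟩
    | succ k ih =>
      intro a
      obtain ⟨p, hp⟩ := ih a
      rw [hMτ, Ideal.span_singleton_pow, Ideal.mem_span_singleton'] at hp
      obtain ⟨w, hw⟩ := hp
      obtain ⟨c, hcw⟩ := hresA w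
      rw [hMτ, Ideal.mem_span_singleton'] at hcw
      obtain ⟨u, hu⟩ := hcw
      refine ⟨p + C c * X ^ k, ?_⟩
      have hφ : φ (p + C c * X ^ k) = φ p + algebraMap K A c * τ ^ k := by
        simp [φ, map_add, map_mul, map_pow]
      have h2 : a - φ (p + C c * X ^ k) = u * τ ^ (k + 1) := by
        rw [hφ]
        calc a - (φ p + algebraMap K A c * τ ^ k)
            = (a - φ p) - algebraMap K A c * τ ^ k := by ring
          _ = w * τ ^ k - algebraMap K A c * τ ^ k := by rw [← hw]
          _ = (w - algebraMap K A c) * τ ^ k := by ring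
          _ = (u * τ) * τ ^ k := by rw [hu]
          _ = u * τ ^ (k + 1) := by ring
      rw [h2, hMτ, Ideal.span_singleton_pow, Ideal.mem_span_singleton']
      exact ⟨u, rfl⟩
  have hsurj : Function.Surjective φ := by
    intro a
    obtain ⟨p, hp⟩ := key n a
    rw [hMn, Ideal.mem_bot, sub_eq_zero] at hp
    exact ⟨p, hp.symm⟩
  have hmn_ne_top : m ^ n ≠ ⊤ := by
    intro h
    exact hm.ne_top (top_unique (h ▸ Ideal.pow_le_self (Nat.one_le_iff_ne_zero.mp hn)))
  haveI : Nontrivial A := Ideal.Quotient.nontrivial_iff.mpr hmn_ne_top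
  obtain ⟨g, hg⟩ := (IsPrincipalIdealRing.principal (RingHom.ker φ)).principal
  have hτn : τ ^ n = 0 := by
    have h1 := Ideal.pow_mem_pow hτM n
    rwa [hMn, Ideal.mem_bot] at h1
  have hXn : (X : Polynomial K) ^ n ∈ RingHom.ker φ := by
    rw [RingHom.mem_ker, map_pow]
    simpa [φ] using hτn
  have hdvd : g ∣ (X : Polynomial K) ^ n := by
    rw [hg] at hXn
    exact Ideal.mem_span_singleton.mp hXn
  obtain ⟨d, hdn, hassoc⟩ := (dvd_prime_pow Polynomial.prime_X n).mp hdvd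
  have hker : RingHom.ker φ = Ideal.span {(X : Polynomial K) ^ d} := by
    rw [hg]
    exact Ideal.span_singleton_eq_span_singleton.mpr hassoc
  have hd1 : 1 ≤ d := by
    rcases Nat.eq_zero_or_pos d with hd0 | hd0
    · exfalso
      have h1 : (1 : Polynomial K) ∈ RingHom.ker φ := by
        rw [hker, hd0, pow_zero]
        exact Ideal.subset_span rfl
      rw [RingHom.mem_ker, map_one] at h1
      exact one_ne_zero h1
    · exact hd0
  exact ⟨d, hd1,
    ⟨(Ideal.quotientEquivAlgOfEq K hker.symm).trans (Ideal.quotientKerAlgEquivOfSurjective hsurj)⟩⟩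

/-- Let `K` be an algebraically closed field of characteristic `0` and `B` a
finite-dimensional commutative `K`-algebra all of whose maximal ideals `m` satisfy
`dim_K m/m² ≤ 1`. Then `B` is isomorphic as a `K`-algebra to a finite product of
truncated polynomial rings `K[X]/(X^{dᵢ})` with `dᵢ ≥ 1`. -/
theorem stmt_15 {K B : Type} [Field K] [IsAlgClosed K] [CharZero K]
    [CommRing B] [Algebra K B] [FiniteDimensional K B]
    (hcot : ∀ m : Ideal B, m.IsMaximal →
      ∃ t ∈ m, ∀ x ∈ m, ∃ c : K, x - c • t ∈ m ^ 2) :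
    ∃ (r : ℕ) (d : Fin r → ℕ), (∀ i, 1 ≤ d i) ∧
      Nonempty (B ≃ₐ[K]
        (∀ i : Fin r, (Polynomial K) ⧸ Ideal.span {(X : Polynomial K) ^ (d i)})) := by
  classical
  haveI : IsArtinianRing B := isArtinian_of_tower K inferInstance
  obtain ⟨n₀, hn₀⟩ := IsArtinianRing.isNilpotent_jacobson_bot (R := B)
  set n : ℕ := n₀ + 1 with hn
  have hJn : (Ideal.jacobson (⊥ : Ideal B)) ^ n = ⊥ := by
    simp [hn, pow_succ, hn₀]
  haveI : Finite {I : Ideal B | I.IsMaximal} := (IsArtinianRing.setOfPred_isMaximal_finite B).to_subtype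
  obtain ⟨r, ⟨e'⟩⟩ := Finite.exists_equiv_fin {I : Ideal B | I.IsMaximal}
  let e : Fin r ≃ {I : Ideal B | I.IsMaximal} := e'.symm
  have hmax : ∀ j : Fin r, ((e j : Ideal B)).IsMaximal := fun j => (e j).2
  -- choose generators of the cotangent spaces and the local structure
  have hfac0 : ∀ (m : Ideal B), m.IsMaximal → ∃ d : ℕ, 1 ≤ d ∧
      Nonempty (((Polynomial K) ⧸ Ideal.span {(X : Polynomial K) ^ d}) ≃ₐ[K]
        B ⧸ m ^ n) := by
    intro m hm
    obtain ⟨t, ht, hct⟩ := hcot m hm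
    exact aux_factor m hm t ht hct n (by omega)
  have hfac : ∀ j : Fin r, ∃ d : ℕ, 1 ≤ d ∧
      Nonempty (((Polynomial K) ⧸ Ideal.span {(X : Polynomial K) ^ d}) ≃ₐ[K]
        B ⧸ ((e j : Ideal B)) ^ n) := fun j => hfac0 (e j) (hmax j)
  choose d hd1 hequiv using hfac
  -- Chinese remainder theorem
  let J : Fin r → Ideal B := fun j => ((e j : Ideal B)) ^ n
  have hpair : Pairwise (Function.onFun IsCoprime J) := by
    intro i j hij
    have hne : ((e i : Ideal B)) ≠ ((e j : Ideal B)) := by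
      intro h
      exact hij (e.injective (Subtype.ext h))
    exact Ideal.isCoprime_iff_sup_eq.mpr
      (Ideal.pow_sup_pow_eq_top ((hmax i).coprime_of_ne (hmax j) hne))
  have hj : Ideal.jacobson (⊥ : Ideal B) = ⨅ j : Fin r, ((e j : Ideal B)) := by
    rw [Ideal.jacobson]
    have h1 : {J : Ideal B | ⊥ ≤ J ∧ J.IsMaximal} = {J : Ideal B | J.IsMaximal} := by
      ext J; simp
    rw [h1, sInf_eq_iInf']
    exact (Equiv.iInf_comp (g := fun I : {I : Ideal B | I.IsMaximal} => (I : Ideal B)) e).symm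
  have hinf : ⨅ j : Fin r, J j = ⊥ := by
    refine le_bot_iff.mp ?_
    calc ⨅ j : Fin r, J j = Finset.univ.inf J := (Finset.inf_univ_eq_iInf J).symm
      _ ≤ ∏ j : Fin r, J j := aux_inf_le_prod _ _ (by
            rw [Finset.coe_univ]; exact Set.pairwise_univ.mpr hpair)
      _ = (∏ j : Fin r, ((e j : Ideal B))) ^ n := by rw [← Finset.prod_pow]
      _ ≤ (⨅ j : Fin r, ((e j : Ideal B))) ^ n :=
            Ideal.pow_right_mono
              (Ideal.prod_le_inf.trans (le_of_eq (Finset.inf_univ_eq_iInf _))) n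
      _ = ⊥ := by rw [← hj, hJn]
  let Φ : B →ₐ[K] ∀ j : Fin r, B ⧸ J j :=
    Pi.algHom K _ (fun j => Ideal.Quotient.mkₐ K (J j))
  have hΦmk : ∀ (b : B) (j : Fin r), Φ b j = Ideal.Quotient.mk (J j) b := fun b j => rfl
  have hinj : Function.Injective Φ := by
    intro x y hxy
    have h1 : x - y ∈ ⨅ j : Fin r, J j := by
      rw [Ideal.mem_iInf]
      intro j
      have h2 : Ideal.Quotient.mk (J j) x = Ideal.Quotient.mk (J j) y := by
        rw [← hΦmk, ← hΦmk, hxy]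
      exact Ideal.Quotient.eq.mp h2
    rwa [hinf, Ideal.mem_bot, sub_eq_zero] at h1
  have hsurjΦ : Function.Surjective Φ := by
    intro y
    obtain ⟨x', hx'⟩ := Ideal.quotientInfToPiQuotient_surj hpair y
    obtain ⟨x, rfl⟩ := Ideal.Quotient.mk_surjective x'
    refine ⟨x, ?_⟩
    funext j
    rw [hΦmk, ← Ideal.quotientInfToPiQuotient_mk' J x j, hx']
  let E1 : B ≃ₐ[K] ∀ j : Fin r, B ⧸ J j := AlgEquiv.ofBijective Φ ⟨hinj, hsurjΦ⟩
  let E2 : (∀ j : Fin r, (Polynomial K) ⧸ Ideal.span {(X : Polynomial K) ^ (d j)}) ≃ₐ[K]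
      ∀ j : Fin r, B ⧸ J j :=
    AlgEquiv.piCongrRight fun j => (hequiv j).some
  exact ⟨r, d, hd1, ⟨E1.trans E2.symm⟩⟩
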